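/- Let C = ∪_{k=1}^t C_k, where each C_k is unitangent and C_k, C_l have distinct tangents for k ≠ l. Then μ(C) + t − 1 = m(C)(m(C) − 1) + Σ_{k=1}^t μ(Ĉ_k), where Ĉ_k is the strict quadratic transform of C_k (Pham's formula). -/

import Mathlib

open ENNReal

/-- An abstract system of plane branches: each branch has a multiplicity and any
two branches have an intersection number (infinite exactly for equal branches). -/
structure BranchSystem where
  Branch : Type
  /-- intersection number `(a,b)₀` -/
  im : Branch → Branch → ℝ≥0∞
  /-- multiplicity `m(b)` -/
  mult : Branch → ℕ
  mult_pos : ∀ b, 0 < mult b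
  im_symm : ∀ a b, im a b = im b a
  im_top_iff : ∀ a b, im a b = ⊤ ↔ a = b
  im_ge : ∀ a b, (mult a : ℝ≥0∞) * (mult b : ℝ≥0∞) ≤ im a b

namespace BranchSystem

variable (S : BranchSystem)

/-- The order of contact `d(a,b) = (a,b)₀ / (m(a)m(b))` of two branches. -/
noncomputable def d (a b : S.Branch) : ℝ≥0∞ :=
  S.im a b / ((S.mult a : ℝ≥0∞) * (S.mult b : ℝ≥0∞))

/-- A branch is smooth iff its multiplicity is `1`. -/
def Smooth (b : S.Branch) : Prop := S.mult b = 1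

/-- Contact of a curve with branches `C i` with a branch `W`: `min_i d(Cᵢ,W)`. -/
noncomputable def dC {r : ℕ} (C : Fin r → S.Branch) (W : S.Branch) : ℝ≥0∞ :=
  ⨅ i, S.d (C i) W

/-- Contact exponent of a curve: `sup` of contacts with smooth branches. -/
noncomputable def dExpC {r : ℕ} (C : Fin r → S.Branch) : ℝ≥0∞ :=
  ⨆ W, ⨆ _ : S.Smooth W, S.dC C W

/-- Contact exponent of a single branch. -/
noncomputable def dExp (b : S.Branch) : ℝ≥0∞ :=
  ⨆ W, ⨆ _ : S.Smooth W, S.d b W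

/-- `d` is a log-distance (ultrametric inequality). -/
def Ultra : Prop := ∀ a b e, min (S.d a e) (S.d e b) ≤ S.d a b

/-- Multiplicity `m(C) = Σᵢ m(Cᵢ)` of a curve. -/
def multC {r : ℕ} (C : Fin r → S.Branch) : ℕ := ∑ i, S.mult (C i)

/-- Intersection number `(C,W)₀ = Σᵢ (Cᵢ,W)₀` of a curve with a branch. -/
noncomputable def imC {r : ℕ} (C : Fin r → S.Branch) (W : S.Branch) : ℝ≥0∞ :=
  ∑ i, S.im (C i) W

/-- Milnor number of a curve with branches `C i`, via
`μ(C) + r − 1 = Σᵢ μ(Cᵢ) + 2 Σ_{i<j} (Cᵢ,Cⱼ)₀`, where `μb` gives the Milnor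
numbers (conductors of the semigroups) of the individual branches. -/
noncomputable def muC (μb : S.Branch → ℕ) {r : ℕ} (C : Fin r → S.Branch) : ℝ≥0∞ :=
  (∑ i, (μb (C i) : ℝ≥0∞)) + (∑ i, ∑ j, if i ≠ j then S.im (C i) (C j) else 0)
    - ((r : ℝ≥0∞) - 1)

end BranchSystem

open BranchSystem

/-- Milnor number of a curve with branches indexed by an arbitrary finite type,
via `μ(C) + r − 1 = Σᵢ μ(Cᵢ) + 2 Σ_{i<j} (Cᵢ,Cⱼ)₀`. -/
noncomputable def muI (S : BranchSystem) (μb : S.Branch → ℕ) {ι : Type}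
    [Fintype ι] [DecidableEq ι] (C : ι → S.Branch) : ℝ≥0∞ :=
  (∑ i, (μb (C i) : ℝ≥0∞)) + (∑ i, ∑ j, if i ≠ j then S.im (C i) (C j) else 0)
    - ((Fintype.card ι : ℝ≥0∞) - 1)


private lemma offdiag_one_le {n : ℕ} (hn : 1 ≤ n) (f : Fin n → Fin n → ℝ≥0∞)
    (hf : ∀ i j, i ≠ j → 1 ≤ f i j) :
    (n : ℝ≥0∞) - 1 ≤ ∑ i, ∑ j, if i ≠ j then f i j else 0 := by
  have i0 : Fin n := ⟨0, hn⟩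
  have h1 : (n : ℝ≥0∞) - 1 = ∑ j, if i0 ≠ j then (1:ℝ≥0∞) else 0 := by
    rw [Finset.sum_boole]
    have hcard : (Finset.filter (fun j => i0 ≠ j) Finset.univ).card = n - 1 := by
      rw [Finset.filter_ne, Finset.card_erase_of_mem (Finset.mem_univ _)]
      simp
    rw [hcard, ENNReal.natCast_sub, Nat.cast_one]
  calc (n : ℝ≥0∞) - 1 = ∑ j, if i0 ≠ j then (1:ℝ≥0∞) else 0 := h1
    _ ≤ ∑ j, if i0 ≠ j then f i0 j else 0 := by
        refine Finset.sum_le_sum fun j _ => ?_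
        by_cases h : i0 = j
        · simp [h]
        · simpa [h] using hf i0 j h
    _ ≤ ∑ i, ∑ j, if i ≠ j then f i j else 0 :=
        Finset.single_le_sum (f := fun i => ∑ j, if i ≠ j then f i j else 0)
          (fun i _ => zero_le) (Finset.mem_univ i0)

/-- Pham's formula: if `C = ⋃_{k=1}^t C_k` with each `C_k` unitangent and the
tangents of `C_k`, `C_l` distinct for `k ≠ l`, then
`μ(C) + t − 1 = m(C)(m(C) − 1) + Σ_k μ(Ĉ_k)`. -/
theorem pham_formula (S : BranchSystem)
    (sameTangent : S.Branch → S.Branch → Prop)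
    (blow : S.Branch → S.Branch)
    -- Noether's formula for branches with a common tangent
    (hNoether : ∀ a b, a ≠ b → sameTangent a b →
      S.im a b = (S.mult a : ℝ≥0∞) * (S.mult b : ℝ≥0∞) + S.im (blow a) (blow b))
    -- transversal branches intersect with multiplicity `m(a)m(b)`
    (hTrans : ∀ a b, a ≠ b → ¬ sameTangent a b →
      S.im a b = (S.mult a : ℝ≥0∞) * (S.mult b : ℝ≥0∞))
    (μb : S.Branch → ℕ)
    -- for a branch, `c(C) = m(C)(m(C)−1) + c(Ĉ)` (conductor under blow-up)
    (hblow_mu : ∀ b, (μb b : ℝ≥0∞) =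
      (S.mult b : ℝ≥0∞) * ((S.mult b : ℝ≥0∞) - 1) + (μb (blow b) : ℝ≥0∞))
    (t : ℕ) (ht : 1 ≤ t) (r : Fin t → ℕ) (hr : ∀ k, 1 ≤ r k)
    (C : (k : Fin t) → Fin (r k) → S.Branch)
    (hC : Function.Injective (fun p : Σ k, Fin (r k) => C p.1 p.2))
    -- each `C_k` is unitangent
    (hUni : ∀ k i j, sameTangent (C k i) (C k j))
    -- distinct `C_k` have distinct tangents
    (hDist : ∀ k l i j, k ≠ l → ¬ sameTangent (C k i) (C l j)) :
    muI S μb (fun p : Σ k, Fin (r k) => C p.1 p.2) + ((t : ℝ≥0∞) - 1) =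
      (∑ p : Σ k, Fin (r k), (S.mult (C p.1 p.2) : ℝ≥0∞)) *
          ((∑ p : Σ k, Fin (r k), (S.mult (C p.1 p.2) : ℝ≥0∞)) - 1) +
        ∑ k, muI S μb (fun i => blow (C k i)) := by
  classical
  set Mn : ℕ := ∑ p : Σ k, Fin (r k), S.mult (C p.1 p.2) with hMn
  set Pn : ℕ := ∑ p : Σ k, Fin (r k), S.mult (C p.1 p.2) * (S.mult (C p.1 p.2) - 1) with hPn
  set S2 : ℕ := ∑ p : Σ k, Fin (r k), S.mult (C p.1 p.2) * S.mult (C p.1 p.2) with hS2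
  set Qn : ℕ := ∑ p : Σ k, Fin (r k), ∑ q : Σ k, Fin (r k),
      if p ≠ q then S.mult (C p.1 p.2) * S.mult (C q.1 q.2) else 0 with hQn
  set Nn : ℕ := ∑ k, r k with hNn
  set A' : ℝ≥0∞ := ∑ p : Σ k, Fin (r k), (μb (blow (C p.1 p.2)) : ℝ≥0∞) with hA'
  set Bk : Fin t → ℝ≥0∞ := fun k => ∑ i, ∑ j,
      if i ≠ j then S.im (blow (C k i)) (blow (C k j)) else 0 with hBk
  set D : ℝ≥0∞ := ∑ k, (Bk k - ((r k : ℝ≥0∞) - 1)) with hD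
  have hm1 : ∀ p : Σ k, Fin (r k), 1 ≤ S.mult (C p.1 p.2) := fun p => S.mult_pos _
  have hCne : ∀ p q : Σ k, Fin (r k), p ≠ q → C p.1 p.2 ≠ C q.1 q.2 :=
    fun p q hpq h => hpq (hC h)
  have hcard : Fintype.card (Σ k, Fin (r k)) = Nn := by simp [hNn]
  have hNM : Nn ≤ Mn := by
    have h0 : Nn = ∑ _p : Σ k, Fin (r k), 1 := by simp [hNn]
    rw [h0, hMn]
    exact Finset.sum_le_sum fun p _ => hm1 p
  have htN : t ≤ Nn := by
    have : t = ∑ _k : Fin t, 1 := by simp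
    rw [this, hNn]
    exact Finset.sum_le_sum fun k _ => hr k
  have hM1 : 1 ≤ Mn := le_trans (le_trans ht htN) hNM
  have hrt : (∑ k : Fin t, (r k - 1)) + t = Nn := by
    have h0 : ∀ k : Fin t, (r k - 1) + 1 = r k := fun k => Nat.sub_add_cancel (hr k)
    calc (∑ k : Fin t, (r k - 1)) + t = ∑ k : Fin t, ((r k - 1) + 1) := by
          rw [Finset.sum_add_distrib]; simp
      _ = ∑ k, r k := by simp [h0]
      _ = Nn := hNn.symm
  have h1 : Pn + Mn = S2 := by
    rw [hPn, hMn, hS2, ← Finset.sum_add_distrib]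
    refine Finset.sum_congr rfl fun p _ => ?_
    obtain ⟨b, hb⟩ := Nat.exists_eq_add_of_le (hm1 p)
    rw [hb, Nat.add_sub_cancel_left]; ring
  have h2 : Qn + S2 = Mn * Mn := by
    rw [hQn, hS2, hMn, Finset.sum_mul_sum, ← Finset.sum_add_distrib]
    refine Finset.sum_congr rfl fun p _ => ?_
    have hdiag : S.mult (C p.1 p.2) * S.mult (C p.1 p.2)
        = ∑ q : Σ k, Fin (r k), if p = q then S.mult (C p.1 p.2) * S.mult (C q.1 q.2) else 0 := by
      rw [Finset.sum_ite_eq]; simp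
    rw [hdiag, ← Finset.sum_add_distrib]
    refine Finset.sum_congr rfl fun q _ => ?_
    by_cases h : p = q <;> simp [h]
  have hmul : Mn * (Mn - 1) + Mn = Mn * Mn := by
    obtain ⟨b, hb⟩ := Nat.exists_eq_add_of_le hM1
    rw [hb, Nat.add_sub_cancel_left]; ring
  have hPQ : Pn + Qn = Mn * (Mn - 1) := by
    generalize hV : Mn * (Mn - 1) = V at hmul ⊢
    generalize hW : Mn * Mn = W at hmul h2
    omega
  have hone : ∀ a b : S.Branch, (1:ℝ≥0∞) ≤ S.im a b := by
    intro a b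
    have ha : (1:ℝ≥0∞) ≤ S.mult a := by exact_mod_cast S.mult_pos a
    have hb : (1:ℝ≥0∞) ≤ S.mult b := by exact_mod_cast S.mult_pos b
    exact le_trans (le_trans ha (le_mul_of_one_le_right zero_le hb)) (S.im_ge a b)
  have hBk' : ∀ k, Bk k = ∑ i, ∑ j,
      if i ≠ j then S.im (blow (C k i)) (blow (C k j)) else 0 := fun k => by rw [hBk]
  have f5 : ∀ k, ((r k : ℝ≥0∞) - 1) ≤ Bk k := by
    intro k
    rw [hBk']
    exact offdiag_one_le (hr k) _ (fun i j _ => hone _ _)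
  -- decomposition of the branch Milnor numbers
  have f1 : (∑ p : Σ k, Fin (r k), (μb (C p.1 p.2) : ℝ≥0∞)) = (Pn : ℝ≥0∞) + A' := by
    rw [hPn, hA', Nat.cast_sum, ← Finset.sum_add_distrib]
    refine Finset.sum_congr rfl fun p _ => ?_
    rw [hblow_mu (C p.1 p.2)]
    congr 1
    rw [Nat.cast_mul, ENNReal.natCast_sub, Nat.cast_one]
  -- decomposition of the intersection sum
  have f2 : (∑ p : Σ k, Fin (r k), ∑ q : Σ k, Fin (r k),
        if p ≠ q then S.im (C p.1 p.2) (C q.1 q.2) else 0)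
      = (Qn : ℝ≥0∞) + ∑ k, Bk k := by
    have step1 : ∀ p q : Σ k, Fin (r k),
        (if p ≠ q then S.im (C p.1 p.2) (C q.1 q.2) else 0)
        = (if p ≠ q then ((S.mult (C p.1 p.2) : ℝ≥0∞) * (S.mult (C q.1 q.2) : ℝ≥0∞)) else 0)
          + (if p.1 = q.1 ∧ p ≠ q then S.im (blow (C p.1 p.2)) (blow (C q.1 q.2)) else 0) := by
      rintro ⟨k, i⟩ ⟨l, j⟩
      by_cases hpq : (⟨k, i⟩ : Σ k, Fin (r k)) = ⟨l, j⟩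
      · simp [hpq]
      · by_cases hk : k = l
        · subst hk
          rw [if_pos hpq, if_pos hpq, if_pos ⟨rfl, hpq⟩,
            hNoether _ _ (hCne _ _ hpq) (hUni k i j)]
        · rw [if_pos hpq, if_pos hpq, if_neg (fun h => hk h.1), add_zero,
            hTrans _ _ (hCne _ _ hpq) (hDist k l i j hk)]
    have step2 : (∑ p : Σ k, Fin (r k), ∑ q : Σ k, Fin (r k),
        if p.1 = q.1 ∧ p ≠ q then S.im (blow (C p.1 p.2)) (blow (C q.1 q.2)) else 0)
        = ∑ k, Bk k := by
      simp only [← Finset.univ_sigma_univ, Finset.sum_sigma]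
      refine Finset.sum_congr rfl fun k _ => ?_
      rw [hBk']
      refine Finset.sum_congr rfl fun i _ => ?_
      rw [Finset.sum_eq_single_of_mem k (Finset.mem_univ k)
        (fun l _ hl => Finset.sum_eq_zero fun j _ => by
          apply if_neg
          rintro ⟨hc, -⟩
          exact hl hc.symm)]
      refine Finset.sum_congr rfl fun j _ => ?_
      by_cases h : i = j
      · simp [h]
      · have hne : (⟨k, i⟩ : Σ k, Fin (r k)) ≠ ⟨k, j⟩ := by
          simp [h]
        rw [if_pos ⟨rfl, hne⟩, if_pos h]
    calc (∑ p : Σ k, Fin (r k), ∑ q : Σ k, Fin (r k),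
          if p ≠ q then S.im (C p.1 p.2) (C q.1 q.2) else 0)
        = (∑ p : Σ k, Fin (r k), ∑ q : Σ k, Fin (r k),
            if p ≠ q then ((S.mult (C p.1 p.2) : ℝ≥0∞) * (S.mult (C q.1 q.2) : ℝ≥0∞)) else 0)
          + (∑ p : Σ k, Fin (r k), ∑ q : Σ k, Fin (r k),
            if p.1 = q.1 ∧ p ≠ q then S.im (blow (C p.1 p.2)) (blow (C q.1 q.2)) else 0) := by
          simp only [step1, Finset.sum_add_distrib]
      _ = (Qn : ℝ≥0∞) + ∑ k, Bk k := by
          rw [step2, hQn]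
          congr 1
          push_cast
          rfl
  have fBkD : (∑ k, Bk k) = ((Nn - t : ℕ) : ℝ≥0∞) + D := by
    have hterm : ∀ k : Fin t, Bk k
        = ((r k - 1 : ℕ) : ℝ≥0∞) + (Bk k - ((r k : ℝ≥0∞) - 1)) := by
      intro k
      rw [ENNReal.natCast_sub, Nat.cast_one]
      exact (add_tsub_cancel_of_le (f5 k)).symm
    rw [Finset.sum_congr rfl fun k _ => hterm k, Finset.sum_add_distrib, hD, ← Nat.cast_sum]
    congr 2
    omega
  have fR : (∑ k, muI S μb (fun i => blow (C k i))) = A' + D := by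
    have hk : ∀ k : Fin t, muI S μb (fun i => blow (C k i))
        = (∑ i, (μb (blow (C k i)) : ℝ≥0∞)) + (Bk k - ((r k : ℝ≥0∞) - 1)) := by
      intro k
      have hun : muI S μb (fun i => blow (C k i))
          = ((∑ i, (μb (blow (C k i)) : ℝ≥0∞)) + Bk k) - ((r k : ℝ≥0∞) - 1) := by
        rw [hBk']
        simp only [muI, Fintype.card_fin]
      have hcan : AddLECancellable ((r k : ℝ≥0∞) - 1) :=
        ENNReal.cancel_of_ne (ne_top_of_le_ne_top (ENNReal.natCast_ne_top _) tsub_le_self)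
      rw [hun, hcan.add_tsub_assoc_of_le (f5 k)]
    rw [Finset.sum_congr rfl fun k _ => hk k, Finset.sum_add_distrib, hD, hA']
    congr 1
    rw [← Finset.univ_sigma_univ, Finset.sum_sigma]
  have hXge : ((Nn : ℝ≥0∞) - 1) ≤ ((Pn + Qn + (Nn - t) : ℕ) : ℝ≥0∞) := by
    rw [← Nat.cast_one, ← ENNReal.natCast_sub]
    have hmle : Mn - 1 ≤ Mn * (Mn - 1) := Nat.le_mul_of_pos_left _ hM1
    refine Nat.cast_le.mpr ?_
    generalize hV : Mn * (Mn - 1) = V at hPQ hmle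
    omega
  have fL : muI S μb (fun p : Σ k, Fin (r k) => C p.1 p.2)
      = (A' + D) + ((Pn + Qn + (Nn - t) : ℕ) : ℝ≥0∞) - ((Nn : ℝ≥0∞) - 1) := by
    have hun : muI S μb (fun p : Σ k, Fin (r k) => C p.1 p.2)
        = ((∑ p : Σ k, Fin (r k), (μb (C p.1 p.2) : ℝ≥0∞))
            + (∑ p : Σ k, Fin (r k), ∑ q : Σ k, Fin (r k),
                if p ≠ q then S.im (C p.1 p.2) (C q.1 q.2) else 0))
          - ((Nn : ℝ≥0∞) - 1) := by
      simp only [muI, hcard]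
    rw [hun, f1, f2, fBkD]
    congr 1
    rw [Nat.cast_add, Nat.cast_add]
    ring
  have hMcast : (∑ p : Σ k, Fin (r k), (S.mult (C p.1 p.2) : ℝ≥0∞)) = (Mn : ℝ≥0∞) := by
    rw [hMn, Nat.cast_sum]
  have hcanN : AddLECancellable ((Nn : ℝ≥0∞) - 1) :=
    ENNReal.cancel_of_ne (ne_top_of_le_ne_top (ENNReal.natCast_ne_top _) tsub_le_self)
  rw [fL, fR, hMcast, hcanN.add_tsub_assoc_of_le hXge]
  have hc1 : ((Nn : ℝ≥0∞) - 1) = ((Nn - 1 : ℕ) : ℝ≥0∞) := by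
    rw [ENNReal.natCast_sub, Nat.cast_one]
  have hc2 : ((t : ℝ≥0∞) - 1) = ((t - 1 : ℕ) : ℝ≥0∞) := by
    rw [ENNReal.natCast_sub, Nat.cast_one]
  have hc3 : (Mn : ℝ≥0∞) * ((Mn : ℝ≥0∞) - 1) = ((Mn * (Mn - 1) : ℕ) : ℝ≥0∞) := by
    rw [Nat.cast_mul, ENNReal.natCast_sub, Nat.cast_one]
  rw [hc1, hc2, hc3, ← ENNReal.natCast_sub, add_assoc, ← Nat.cast_add]
  have hnat : (Pn + Qn + (Nn - t)) - (Nn - 1) + (t - 1) = Mn * (Mn - 1) := by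
    have hmle : Mn - 1 ≤ Mn * (Mn - 1) := Nat.le_mul_of_pos_left _ hM1
    generalize hV : Mn * (Mn - 1) = V at hPQ hmle ⊢
    omega
  rw [hnat]
  ring
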